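/- Let A : ℕ → ℕ be defined by A(0) = 1, A(1) = 2, and A(n) = 1 + C(A(n−2)+1, 2) + A(n−2)·(A(n−1) − A(n−2)) for n ≥ 2, and let F(m) denote the m-th Fibonacci number (F(0)=0, F(1)=1). Then there exist real constants K₁ > 0 and K₂ > 1 such that A(n)/(K₁·K₂^(((3√5−5)/2)·F(n+2))) tends to 1 as n → ∞. -/

import Mathlib

open Filter Real

def A : ℕ → ℕ
  | 0 => 1
  | 1 => 2
  | n + 2 => 1 + Nat.choose (A n + 1) 2 + A n * (A (n + 1) - A n)

noncomputable def Blog (n : ℕ) : ℝ := Real.log (A n)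

noncomputable def eps (n : ℕ) : ℝ := Blog (n + 3) - Blog (n + 2) - Blog (n + 1)

noncomputable def Dd (n : ℕ) : ℝ := Blog (n + 2) - goldenRatio * Blog (n + 1)

noncomputable def ff (k : ℕ) : ℝ := Dd k / goldenRatio ^ (k + 2)

noncomputable def lam : ℝ := Blog 1 / goldenRatio + ∑' k, ff k



lemma A_basic : ∀ n, 1 ≤ A n ∧ A n ≤ A (n + 1) := by
  intro n
  induction n with
  | zero => exact ⟨le_refl 1, by norm_num [A]⟩
  | succ n ih =>
    obtain ⟨h1, h2⟩ := ih
    refine ⟨le_trans h1 h2, ?_⟩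
    show A (n+1) ≤ 1 + Nat.choose (A n + 1) 2 + A n * (A (n + 1) - A n)
    have hc : A n ≤ Nat.choose (A n + 1) 2 := by
      rw [Nat.choose_two_right]
      simp only [Nat.add_sub_cancel]
      rw [Nat.le_div_iff_mul_le (by norm_num)]
      nlinarith
    have : A (n+1) - A n ≤ A n * (A (n+1) - A n) := Nat.le_mul_of_pos_left _ h1
    omega

lemma A_one_le (n : ℕ) : 1 ≤ A n := (A_basic n).1

lemma A_mono (n : ℕ) : A n ≤ A (n + 1) := (A_basic n).2

lemma A_two_le (n : ℕ) : 2 ≤ A (n + 1) := by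
  induction n with
  | zero => norm_num [A]
  | succ n ih => exact le_trans ih (A_mono (n+1))

lemma A_identity (n : ℕ) : 2 * A (n + 2) + A n * A n = 2 + A n + 2 * (A n * A (n + 1)) := by
  obtain ⟨c, hc⟩ : ∃ c, A (n+1) = A n + c := ⟨A (n+1) - A n, by have := A_mono n; omega⟩
  show 2 * (1 + Nat.choose (A n + 1) 2 + A n * (A (n + 1) - A n)) + _ = _
  have h2 : 2 * Nat.choose (A n + 1) 2 = A n * (A n + 1) := by
    rw [Nat.choose_two_right]
    simp only [Nat.add_sub_cancel]
    have hev : Even ((A n + 1) * A n) := by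
      rw [mul_comm]; exact Nat.even_mul_succ_self _
    rw [Nat.mul_div_cancel' hev.two_dvd]
    ring
  rw [hc]
  simp only [Nat.add_sub_cancel_left]
  ring_nf
  ring_nf at h2
  omega

-- lower bound: A n * A (n+1) ≤ 2 * A (n+2)
lemma A_lower (n : ℕ) : A n * A (n + 1) ≤ 2 * A (n + 2) := by
  have h := A_identity n
  have h1 := A_one_le n
  have h2 := A_mono n
  nlinarith

-- upper bound: A (n+3) ≤ A (n+1) * A (n+2)
lemma A_upper (n : ℕ) : A (n + 3) ≤ A (n + 1) * A (n + 2) := by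
  have h := A_identity (n + 1)
  have h1 := A_two_le n
  have h2 := A_mono (n + 1)
  nlinarith

-- refined lower: A n * (A(n+1)*A(n+2)) ≤ A n * A(n+3) + A(n+1)*A(n+2)
lemma A_refined (n : ℕ) : A n * (A (n + 1) * A (n + 2)) ≤ A n * A (n + 3) + A (n + 1) * A (n + 2) := by
  have h := A_identity (n + 1)
  have hl := A_lower n
  have h1 := A_one_le n
  have h2 := A_two_le n
  have h3 := A_mono (n + 1)
  -- need: A n * a^2 ≤ A n * (2 + a) + 2ab where a = A(n+1), b = A(n+2), using A n * a ≤ 2b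
  nlinarith [mul_le_mul_left hl (A (n+1))]

lemma A_pow2 : ∀ n, 2 ^ (n + 4) ≤ A (n + 4) ∧ 2 ^ (n + 5) ≤ A (n + 5) := by
  intro n
  induction n with
  | zero =>
    exact ⟨by decide, by decide⟩
  | succ n ih =>
    obtain ⟨h1, h2⟩ := ih
    refine ⟨h2, ?_⟩
    have hl := A_lower (n + 4)
    have : 2 ^ (n + 4) * 2 ^ (n + 5) ≤ 2 * A (n + 6) :=
      le_trans (Nat.mul_le_mul h1 h2) hl
    have hp : 2 ^ (n + 7) ≤ 2 ^ (n + 4) * 2 ^ (n + 5) := by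
      rw [← pow_add]; exact Nat.pow_le_pow_right (by norm_num) (by omega)
    have h27 : 2 * 2 ^ (n + 6) ≤ 2 * A (n + 6) := by
      calc 2 * 2 ^ (n + 6) = 2 ^ (n + 7) := by ring
      _ ≤ 2 ^ (n + 4) * 2 ^ (n + 5) := hp
      _ ≤ 2 * A (n + 6) := this
    exact Nat.le_of_mul_le_mul_left h27 (by norm_num)

lemma A_fib : ∀ n, 2 * 8 ^ (Nat.fib (n + 2)) ≤ A (n + 5) ∧ 2 * 8 ^ (Nat.fib (n + 3)) ≤ A (n + 6) := by
  intro n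
  induction n with
  | zero =>
    exact ⟨by decide, by decide⟩
  | succ n ih =>
    obtain ⟨h1, h2⟩ := ih
    refine ⟨h2, ?_⟩
    have hl := A_lower (n + 5)
    have hm : (2 * 8 ^ (Nat.fib (n+2))) * (2 * 8 ^ (Nat.fib (n+3))) ≤ 2 * A (n + 7) :=
      le_trans (Nat.mul_le_mul h1 h2) hl
    have hfib : Nat.fib (n + 4) = Nat.fib (n + 2) + Nat.fib (n + 3) :=
      Nat.fib_add_two
    rw [hfib, pow_add] at *
    nlinarith [pow_pos (show 0 < 8 by norm_num) (Nat.fib (n+2)), pow_pos (show 0 < 8 by norm_num) (Nat.fib (n+3))]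

lemma A_cast_pos (n : ℕ) : (0 : ℝ) < (A n : ℝ) := by
  have := A_one_le n; exact_mod_cast Nat.lt_of_lt_of_le Nat.zero_lt_one this

lemma A_cast_one_le (n : ℕ) : (1 : ℝ) ≤ (A n : ℝ) := by exact_mod_cast A_one_le n

lemma Blog_nonneg (n : ℕ) : 0 ≤ Blog n := Real.log_nonneg (A_cast_one_le n)

lemma eps_nonpos (n : ℕ) : eps n ≤ 0 := by
  have h : (A (n + 3) : ℝ) ≤ (A (n + 1) : ℝ) * (A (n + 2) : ℝ) := by
    exact_mod_cast A_upper n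
  have := Real.log_le_log (A_cast_pos (n + 3)) h
  rw [Real.log_mul (ne_of_gt (A_cast_pos (n+1))) (ne_of_gt (A_cast_pos (n+2)))] at this
  simp only [eps, Blog]
  linarith

lemma eps_ge_neg_log_two (n : ℕ) : -Real.log 2 ≤ eps n := by
  have h : (A (n + 1) : ℝ) * (A (n + 2) : ℝ) / 2 ≤ (A (n + 3) : ℝ) := by
    have := A_lower (n + 1)
    have h2 : (A (n+1) : ℝ) * A (n+2) ≤ 2 * A (n+3) := by exact_mod_cast this
    linarith
  have hpos : (0:ℝ) < (A (n+1) : ℝ) * (A (n+2) : ℝ) / 2 := by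
    have := A_cast_pos (n+1); have := A_cast_pos (n+2); positivity
  have := Real.log_le_log hpos h
  rw [Real.log_div (ne_of_gt (mul_pos (A_cast_pos (n+1)) (A_cast_pos (n+2)))) (by norm_num),
      Real.log_mul (ne_of_gt (A_cast_pos (n+1))) (ne_of_gt (A_cast_pos (n+2)))] at this
  simp only [eps, Blog]
  linarith

lemma log_one_sub_ge {x : ℝ} (h0 : 0 ≤ x) (h2 : x ≤ 1/2) : -(2*x) ≤ Real.log (1 - x) := by
  have hx1 : 0 < 1 - x := by linarith
  rw [← Real.log_exp (-(2*x))]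
  apply Real.log_le_log (Real.exp_pos _)
  have hexp : 1 + 2*x ≤ Real.exp (2*x) := by
    have := Real.add_one_le_exp (2*x); linarith
  have hpos : (0:ℝ) < 1 + 2*x := by linarith
  have : Real.exp (-(2*x)) = (Real.exp (2*x))⁻¹ := by rw [Real.exp_neg]
  rw [this]
  have h1 : (Real.exp (2*x))⁻¹ ≤ (1 + 2*x)⁻¹ := by
    apply inv_anti₀ hpos hexp
  have h2' : (1 + 2*x)⁻¹ ≤ 1 - x := by
    rw [inv_le_iff_one_le_mul₀ hpos]  -- maybe wrong name
    nlinarith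
  linarith

lemma eps_ge (n : ℕ) : -(2 / (A (n+1) : ℝ)) ≤ eps (n + 1) := by
  have hA : (2:ℝ) ≤ (A (n+1) : ℝ) := by exact_mod_cast A_two_le n
  have hApos : (0:ℝ) < (A (n+1) : ℝ) := by linarith
  set x : ℝ := 1 / (A (n+1) : ℝ) with hx
  have hx0 : 0 ≤ x := by positivity
  have hx2 : x ≤ 1/2 := by
    rw [hx, div_le_div_iff₀ hApos (by norm_num)]; linarith
  -- A (n+4) ≥ A(n+2)*A(n+3)*(1 - x)
  have key : (A (n+2) : ℝ) * (A (n+3) : ℝ) * (1 - x) ≤ (A (n+4) : ℝ) := by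
    have hr := A_refined (n + 1)
    have hr' : (A (n+1) : ℝ) * ((A (n+2):ℝ) * (A (n+3):ℝ)) ≤ (A (n+1):ℝ) * (A (n+4):ℝ) + (A (n+2):ℝ) * (A (n+3):ℝ) := by
      exact_mod_cast hr
    have hxx : x * (A (n+1) : ℝ) = 1 := by
      rw [hx]; field_simp
    nlinarith [A_cast_pos (n+2), A_cast_pos (n+3)]
  have h1x : (0:ℝ) < 1 - x := by linarith
  have hP : (0:ℝ) < (A (n+2) : ℝ) * (A (n+3) : ℝ) * (1 - x) := by
    have := A_cast_pos (n+2); have := A_cast_pos (n+3); positivity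
  have hlog := Real.log_le_log hP key
  rw [Real.log_mul (ne_of_gt (mul_pos (A_cast_pos (n+2)) (A_cast_pos (n+3)))) (ne_of_gt h1x), Real.log_mul (ne_of_gt (A_cast_pos (n+2))) (ne_of_gt (A_cast_pos (n+3)))] at hlog
  have hlb := log_one_sub_ge hx0 hx2
  simp only [eps, Blog]
  have : -(2/(A (n+1):ℝ)) = -(2*x) := by rw [hx]; ring
  rw [this]
  show -(2*x) ≤ Real.log (A (n+1+3):ℕ) - Real.log (A (n+1+2):ℕ) - Real.log (A (n+1+1):ℕ)
  have h4 : ((n+1)+3) = n + 4 := by ring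
  have h3 : ((n+1)+2) = n + 3 := by ring
  have h2 : ((n+1)+1) = n + 2 := by ring
  rw [h4, h3, h2]
  linarith

lemma eps_abs (n : ℕ) : |eps n| ≤ 4 * (3/4 : ℝ) ^ n := by
  rw [abs_le]
  constructor
  swap
  · have := eps_nonpos n
    have : (0:ℝ) ≤ 4 * (3/4:ℝ)^n := by positivity
    linarith [eps_nonpos n]
  · rcases Nat.lt_or_ge n 5 with h | h
    · have hl2 : Real.log 2 ≤ 1 := by
        have := Real.log_le_sub_one_of_pos (show (0:ℝ) < 2 by norm_num); linarith
      have h1 : -(1:ℝ) ≤ eps n := by linarith [eps_ge_neg_log_two n]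
      have h2 : (1:ℝ) ≤ 4 * (3/4:ℝ)^n := by
        interval_cases n <;> norm_num
      linarith
    · obtain ⟨m, rfl⟩ : ∃ m, n = m + 5 := ⟨n - 5, by omega⟩
      have hb := eps_ge (m + 4)
      have hA : (2:ℝ)^(m+5) ≤ (A (m+5) : ℝ) := by exact_mod_cast (A_pow2 (m+1)).1
      have hApos := A_cast_pos (m+5)
      have h2p : (0:ℝ) < (2:ℝ)^(m+5) := by positivity
      have hdiv : 2 / (A (m+5) : ℝ) ≤ 2 / 2^(m+5) := by
        apply div_le_div_of_nonneg_left (by norm_num) h2p hA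
      have hgeom : 2 / (2:ℝ)^(m+5) ≤ 4 * (3/4:ℝ)^(m+5) := by
        rw [div_le_iff₀ h2p]
        have : (3/4:ℝ)^(m+5) * 2^(m+5) = (3/2:ℝ)^(m+5) := by
          rw [← mul_pow]; norm_num
        calc (2:ℝ) ≤ 4 * 1 := by norm_num
        _ ≤ 4 * (3/2:ℝ)^(m+5) := by
          have : (1:ℝ) ≤ (3/2:ℝ)^(m+5) := one_le_pow₀ (by norm_num)
          nlinarith
        _ = 4 * ((3/4:ℝ)^(m+5) * 2^(m+5)) := by rw [‹(3/4:ℝ)^(m+5) * 2^(m+5) = _›]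
        _ = 4 * (3/4:ℝ)^(m+5) * 2^(m+5) := by ring
      have : eps (m + 5) ≥ -(4 * (3/4:ℝ)^(m+5)) := by
        have : -(2 / (A (m+5):ℝ)) ≤ eps (m+5) := hb
        linarith
      linarith

-- golden ratio facts
lemma sqrt5_sq : Real.sqrt 5 * Real.sqrt 5 = 5 := Real.mul_self_sqrt (by norm_num)

lemma sqrt5_le : Real.sqrt 5 ≤ 9/4 := by
  rw [show (9:ℝ)/4 = Real.sqrt ((9/4)^2) from (Real.sqrt_sq (by norm_num)).symm]
  apply Real.sqrt_le_sqrt; norm_num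

lemma sqrt5_ge : (2:ℝ) ≤ Real.sqrt 5 := by
  rw [show (2:ℝ) = Real.sqrt 4 from (Real.sqrt_eq_iff_eq_sq (by norm_num) (by norm_num)).mpr (by norm_num) |>.symm]
  apply Real.sqrt_le_sqrt; norm_num

lemma goldConj_abs : |goldenConj| ≤ 5/8 := by
  rw [abs_le]
  constructor
  · have : goldenConj = (1 - Real.sqrt 5)/2 := rfl
    rw [this]; linarith [sqrt5_le]
  · have : goldenConj = (1 - Real.sqrt 5)/2 := rfl
    rw [this]; linarith [sqrt5_ge]

lemma gold_ge : (3/2 : ℝ) ≤ goldenRatio := by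
  have : goldenRatio = (1 + Real.sqrt 5)/2 := rfl
  rw [this]; linarith [sqrt5_ge]

lemma gold_one_le_pow (k : ℕ) : (1:ℝ) ≤ goldenRatio ^ k :=
  one_le_pow₀ (le_of_lt one_lt_goldenRatio)

lemma Dd_rec (n : ℕ) : Dd (n + 1) = goldenConj * Dd n + eps n := by
  simp only [Dd, eps]
  have h1 : goldenRatio * goldenConj = -1 := goldenRatio_mul_goldenConj
  have h2 : goldenRatio + goldenConj = 1 := goldenRatio_add_goldenConj
  have e3 : n + 1 + 2 = n + 3 := by ring
  have e2 : n + 1 + 1 = n + 2 := by ring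
  rw [e3, e2]
  linear_combination (-(Blog (n + 2))) * h2 + Blog (n + 1) * h1

lemma Dd_bound : ∀ n, |Dd n| ≤ 32 * (3/4 : ℝ) ^ n := by
  intro n
  induction n with
  | zero =>
    have hA2 : A 2 = 3 := by decide
    have hA1 : A 1 = 2 := by decide
    have h0 : Dd 0 = Real.log 3 - goldenRatio * Real.log 2 := by
      simp [Dd, Blog, hA2, hA1]
    rw [h0]
    have hl3 : Real.log 3 ≤ 2 := by
      have := Real.log_le_sub_one_of_pos (show (0:ℝ) < 3 by norm_num); linarith
    have hl2 : Real.log 2 ≤ 1 := by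
      have := Real.log_le_sub_one_of_pos (show (0:ℝ) < 2 by norm_num); linarith
    have hl3' : 0 ≤ Real.log 3 := Real.log_nonneg (by norm_num)
    have hl2' : 0 ≤ Real.log 2 := Real.log_nonneg (by norm_num)
    have hg : goldenRatio < 2 := goldenRatio_lt_two
    have hg' : 0 < goldenRatio := goldenRatio_pos
    rw [abs_le]
    constructor <;> [nlinarith; nlinarith]
  | succ n ih =>
    rw [Dd_rec n]
    calc |goldenConj * Dd n + eps n| ≤ |goldenConj * Dd n| + |eps n| := abs_add_le _ _
    _ = |goldenConj| * |Dd n| + |eps n| := by rw [abs_mul]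
    _ ≤ (5/8) * (32 * (3/4:ℝ)^n) + 4 * (3/4:ℝ)^n := by
        have h1 := goldConj_abs
        have h2 := eps_abs n
        have h3 : (0:ℝ) ≤ |Dd n| := abs_nonneg _
        have h4 : (0:ℝ) ≤ |goldenConj| := abs_nonneg _
        nlinarith [pow_nonneg (show (0:ℝ) ≤ 3/4 by norm_num) n]
    _ = 32 * (3/4:ℝ)^(n+1) := by rw [pow_succ]; ring

lemma ff_bound (k : ℕ) : |ff k| ≤ 32 * (3/4:ℝ)^k := by
  have h1 : |ff k| = |Dd k| / goldenRatio ^ (k+2) := by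
    rw [ff, abs_div, abs_of_pos (pow_pos goldenRatio_pos (k+2))]
  rw [h1]
  calc |Dd k| / goldenRatio ^ (k+2) ≤ |Dd k| / 1 := by
        apply div_le_div_of_nonneg_left (abs_nonneg _) (by norm_num) (gold_one_le_pow (k+2))
  _ = |Dd k| := by ring
  _ ≤ 32 * (3/4:ℝ)^k := Dd_bound k

lemma ff_summable : Summable ff := by
  apply Summable.of_norm_bounded (g := fun k => 32 * (3/4:ℝ)^k)
  · exact (summable_geometric_of_lt_one (by norm_num) (by norm_num)).mul_left 32
  · intro k; exact ff_bound k

lemma partial_sum (n : ℕ) :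
    Blog (n + 1) / goldenRatio ^ (n + 1) = Blog 1 / goldenRatio + ∑ k ∈ Finset.range n, ff k := by
  induction n with
  | zero => simp [pow_one]
  | succ n ih =>
    rw [Finset.sum_range_succ, ← add_assoc, ← ih, ff]
    have hg : goldenRatio ≠ 0 := goldenRatio_ne_zero
    have heps : Blog (n + 2) = Dd n + goldenRatio * Blog (n + 1) := by simp [Dd]
    rw [heps]
    field_simp
    ring

lemma ffnorm_summable : Summable (fun k => |ff k|) := by
  apply Summable.of_nonneg_of_le (fun _ => abs_nonneg _) ff_bound
  exact (summable_geometric_of_lt_one (by norm_num) (by norm_num)).mul_left 32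

set_option maxHeartbeats 1000000 in
lemma g_bound (n : ℕ) :
    |Blog (n + 1) - lam * goldenRatio ^ (n + 1)| ≤ 128 * (3/4 : ℝ) ^ n := by
  have htail := Summable.sum_add_tsum_nat_add (f := ff) n ff_summable
  have hps := partial_sum n
  have hgp : (0:ℝ) < goldenRatio ^ (n + 1) := pow_pos goldenRatio_pos _
  have hkey : Blog (n + 1) - lam * goldenRatio ^ (n + 1)
      = -(goldenRatio ^ (n + 1) * ∑' i, ff (i + n)) := by
    have h1 : lam = Blog (n+1) / goldenRatio ^ (n+1) + ∑' i, ff (i + n) := by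
      rw [lam, ← htail, hps]; ring
    rw [h1, add_mul, div_mul_cancel₀ _ (ne_of_gt hgp)]
    ring
  rw [hkey, abs_neg, abs_mul, abs_of_pos hgp]
  have hshift : Summable (fun i => |ff (i + n)|) :=
    (summable_nat_add_iff n).mpr ffnorm_summable
  have habs : |∑' i, ff (i + n)| ≤ ∑' i, |ff (i + n)| := by
    have := norm_tsum_le_tsum_norm (f := fun i => ff (i + n))
      (by simpa only [Real.norm_eq_abs] using hshift)
    simpa only [Real.norm_eq_abs] using this
  have hterm : ∀ i, goldenRatio ^ (n + 1) * |ff (i + n)| ≤ 32 * (3/4:ℝ)^n * (3/4:ℝ)^i := by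
    intro i
    have h1 : |ff (i + n)| = |Dd (i + n)| / goldenRatio ^ (i + n + 2) := by
      rw [ff, abs_div, abs_of_pos (pow_pos goldenRatio_pos _)]
    have h2 : |Dd (i + n)| ≤ 32 * (3/4:ℝ)^(i + n) := Dd_bound (i + n)
    have hpow : goldenRatio ^ (i + n + 2) = goldenRatio ^ (n + 1) * goldenRatio ^ (i + 1) := by
      rw [← pow_add]; ring_nf
    have hgp2 : (0:ℝ) < goldenRatio ^ (i + 1) := pow_pos goldenRatio_pos _
    rw [h1, hpow, mul_div_assoc', div_le_iff₀ (by positivity)]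
    have h34 : (3/4:ℝ)^(i+n) = (3/4:ℝ)^n * (3/4:ℝ)^i := by rw [← pow_add]; ring_nf
    have hge1 : (1:ℝ) ≤ goldenRatio ^ (i+1) := gold_one_le_pow _
    calc goldenRatio ^ (n+1) * |Dd (i+n)| ≤ goldenRatio ^ (n+1) * (32 * (3/4:ℝ)^(i+n)) := by
          nlinarith [abs_nonneg (Dd (i+n))]
    _ = 32 * (3/4:ℝ)^n * (3/4:ℝ)^i * goldenRatio ^ (n+1) * 1 := by rw [h34]; ring
    _ ≤ 32 * (3/4:ℝ)^n * (3/4:ℝ)^i * goldenRatio ^ (n+1) * goldenRatio ^ (i+1) := by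
          have hnn : (0:ℝ) ≤ 32 * (3/4:ℝ)^n * (3/4:ℝ)^i * goldenRatio ^ (n+1) := by positivity
          nlinarith
    _ = 32 * (3/4:ℝ)^n * (3/4:ℝ)^i * (goldenRatio ^ (n+1) * goldenRatio ^ (i+1)) := by ring
  calc goldenRatio ^ (n+1) * |∑' i, ff (i + n)| ≤ goldenRatio ^ (n+1) * ∑' i, |ff (i + n)| := by
        nlinarith [abs_nonneg (∑' i, ff (i+n))]
  _ = ∑' i, goldenRatio ^ (n+1) * |ff (i + n)| := by rw [← tsum_mul_left]
  _ ≤ ∑' i, 32 * (3/4:ℝ)^n * (3/4:ℝ)^i := by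
        apply Summable.tsum_le_tsum hterm (hshift.mul_left _)
        exact (summable_geometric_of_lt_one (by norm_num) (by norm_num)).mul_left _
  _ = 32 * (3/4:ℝ)^n * ∑' i, (3/4:ℝ)^i := tsum_mul_left
  _ = 32 * (3/4:ℝ)^n * 4 := by
        rw [tsum_geometric_of_lt_one (by norm_num) (by norm_num)]; norm_num
  _ = 128 * (3/4:ℝ)^n := by ring

lemma g_tendsto : Tendsto (fun n => Blog n - lam * goldenRatio ^ n) atTop (nhds 0) := by
  rw [← tendsto_add_atTop_iff_nat 1]
  apply squeeze_zero_norm (fun n => g_bound n)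
  have := (tendsto_pow_atTop_nhds_zero_of_lt_one (show (0:ℝ) ≤ 3/4 by norm_num)
    (show (3/4:ℝ) < 1 by norm_num)).const_mul (128:ℝ)
  simpa using this

lemma fib_ge : ∀ m, goldenRatio ^ m ≤ (Nat.fib (m + 2) : ℝ) ∧
    goldenRatio ^ (m+1) ≤ (Nat.fib (m + 3) : ℝ) := by
  intro m
  induction m with
  | zero =>
    constructor
    · simp
    · rw [pow_one]; simp [Nat.fib]
      linarith [goldenRatio_lt_two]
  | succ m ih =>
    obtain ⟨h1, h2⟩ := ih
    refine ⟨h2, ?_⟩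
    have hfib : (Nat.fib (m + 4) : ℝ) = (Nat.fib (m + 2) : ℝ) + (Nat.fib (m + 3) : ℝ) := by
      have : Nat.fib (m + 4) = Nat.fib (m + 2) + Nat.fib (m + 3) := Nat.fib_add_two
      exact_mod_cast this
    have hsq : goldenRatio ^ (m + 1 + 1) = goldenRatio ^ m + goldenRatio ^ (m + 1) := by
      have h := goldenRatio_sq
      calc goldenRatio ^ (m+1+1) = goldenRatio ^ m * goldenRatio ^ 2 := by rw [← pow_add]
      _ = goldenRatio ^ m * (goldenRatio + 1) := by rw [h]
      _ = goldenRatio ^ m + goldenRatio ^ (m+1) := by ring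
    rw [hsq, show m + 1 + 3 = m + 4 from rfl, hfib]
    linarith

lemma lam_pos : 0 < lam := by
  have hv : Tendsto (fun n => Blog 1 / goldenRatio + ∑ k ∈ Finset.range n, ff k) atTop (nhds lam) :=
    (ff_summable.hasSum.tendsto_sum_nat).const_add _
  have hl2 : 0 < Real.log 2 := Real.log_pos (by norm_num)
  have hg5 : (0:ℝ) < goldenRatio ^ 5 := pow_pos goldenRatio_pos 5
  have hmu : (0:ℝ) < 3 * Real.log 2 / goldenRatio ^ 5 := by positivity
  refine lt_of_lt_of_le hmu (ge_of_tendsto hv ?_)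
  rw [eventually_atTop]
  refine ⟨4, fun n hn => ?_⟩
  obtain ⟨m, rfl⟩ : ∃ m, n = m + 4 := ⟨n - 4, by omega⟩
  rw [← partial_sum]
  have hA : (8:ℝ) ^ (Nat.fib (m + 2)) ≤ (A (m + 5) : ℝ) := by
    have h2 : (2 * 8 ^ Nat.fib (m + 2) : ℕ) ≤ A (m + 5) := (A_fib m).1
    have h3 : ((8:ℕ) ^ Nat.fib (m+2) : ℕ) ≤ A (m + 5) := le_trans (by omega) h2
    exact_mod_cast h3
  have hblog : 3 * Real.log 2 * goldenRatio ^ m ≤ Blog (m + 5) := by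
    have h1 : Real.log ((8:ℝ) ^ (Nat.fib (m+2))) ≤ Blog (m + 5) :=
      Real.log_le_log (by positivity) hA
    rw [Real.log_pow] at h1
    have h8 : Real.log 8 = 3 * Real.log 2 := by
      rw [show (8:ℝ) = 2 ^ 3 by norm_num, Real.log_pow]; push_cast; ring
    rw [h8] at h1
    have hfge : goldenRatio ^ m ≤ (Nat.fib (m + 2) : ℝ) := (fib_ge m).1
    nlinarith
  have hm4 : m + 4 + 1 = m + 5 := by ring
  rw [hm4]
  rw [div_le_div_iff₀ hg5 (pow_pos goldenRatio_pos _)]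
  have hpow : goldenRatio ^ (m + 5) = goldenRatio ^ m * goldenRatio ^ 5 := by rw [← pow_add]
  rw [hpow]
  have hBnn : 0 ≤ Blog (m + 5) := Real.log_nonneg (A_cast_one_le (m+5))
  nlinarith

theorem stmt_14 :
    ∃ K₁ K₂ : ℝ, 0 < K₁ ∧ 1 < K₂ ∧
      Tendsto (fun n : ℕ =>
          (A n : ℝ) /
            (K₁ * K₂ ^ (((3 * Real.sqrt 5 - 5) / 2) * (Nat.fib (n + 2) : ℝ))))
        atTop (nhds 1) := by
  refine ⟨1, Real.exp lam, one_pos, ?_, ?_⟩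
  · rw [Real.one_lt_exp_iff]; exact lam_pos
  have h5 : Real.sqrt 5 ≠ 0 := by
    intro h
    have := sqrt5_sq
    rw [h] at this; norm_num at this
  have hcphi : ((3 * Real.sqrt 5 - 5) / 2) * goldenRatio ^ 2 = Real.sqrt 5 := by
    have h := sqrt5_sq
    rw [goldenRatio_sq]
    show (3 * Real.sqrt 5 - 5) / 2 * ((1 + Real.sqrt 5) / 2 + 1) = Real.sqrt 5
    linear_combination (3/4 : ℝ) * h
  have hc2 : ((3 * Real.sqrt 5 - 5) / 2) = Real.sqrt 5 / goldenRatio ^ 2 := by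
    rw [eq_div_iff (pow_ne_zero _ goldenRatio_ne_zero)]
    exact hcphi
  have hfib_id : ∀ n : ℕ, ((3 * Real.sqrt 5 - 5) / 2) * (Nat.fib (n+2) : ℝ)
      = goldenRatio ^ n - goldenConj ^ (n + 2) / goldenRatio ^ 2 := by
    intro n
    have key : ∀ x y : ℝ, Real.sqrt 5 / goldenRatio ^ 2 * ((x * goldenRatio ^ 2 - y) / Real.sqrt 5)
        = x - y / goldenRatio ^ 2 := by
      intro x y
      have hg : goldenRatio ^ 2 ≠ 0 := pow_ne_zero _ goldenRatio_ne_zero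
      field_simp
    have hpow : goldenRatio ^ (n + 2) = goldenRatio ^ n * goldenRatio ^ 2 := by
      rw [← pow_add]
    rw [Real.coe_fib_eq, hc2, hpow]
    exact key _ _
  have heq : ∀ n : ℕ, (A n : ℝ) /
      (1 * Real.exp lam ^ (((3 * Real.sqrt 5 - 5) / 2) * (Nat.fib (n + 2) : ℝ)))
      = Real.exp ((Blog n - lam * goldenRatio ^ n)
          + lam * (goldenConj ^ (n+2) / goldenRatio ^ 2)) := by
    intro n
    rw [one_mul, Real.rpow_def_of_pos (Real.exp_pos _), Real.log_exp]
    rw [show (A n : ℝ) = Real.exp (Blog n) from (Real.exp_log (A_cast_pos n)).symm]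
    rw [← Real.exp_sub]
    congr 1
    rw [hfib_id n]
    ring
  have h2 : Tendsto (fun n : ℕ => lam * (goldenConj ^ (n+2) / goldenRatio ^ 2)) atTop (nhds 0) := by
    have habs : |goldenConj| < 1 := lt_of_le_of_lt goldConj_abs (by norm_num)
    have ht := (tendsto_pow_atTop_nhds_zero_of_abs_lt_one habs).const_mul
      (lam * goldenConj ^ 2 / goldenRatio ^ 2)
    rw [mul_zero] at ht
    apply ht.congr
    intro n
    rw [show n + 2 = n + 2 from rfl, pow_add]
    ring
  have hsum := g_tendsto.add h2
  rw [add_zero] at hsum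
  have hexp := (Real.continuous_exp.tendsto 0).comp hsum
  rw [Real.exp_zero] at hexp
  exact hexp.congr (fun n => (heq n).symm)
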